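/- Easy direction of the discrete Cheeger inequality: let G be a d-regular simple graph on n vertices with adjacency matrix A, and let μ₂ denote the second-largest eigenvalue of A. Then (d − μ₂)/2 ≤ h(G), where h(G) is the Cheeger constant of G. -/

import Mathlib

set_option linter.unusedSectionVars false
set_option maxHeartbeats 1000000

open Classical in
/-- The number of boundary edges `|∂S| = |{(u,v) ∈ ℰ : u ∈ S, v ∉ S}|` of a vertex
set `S` in a finite simple graph `G`. -/
noncomputable def edgeBoundaryCard {V : Type*} [Fintype V] (G : SimpleGraph V)
    (S : Finset V) : ℕ :=
  (Finset.univ.filter (fun p : V × V => p.1 ∈ S ∧ p.2 ∉ S ∧ G.Adj p.1 p.2)).card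

/-- The Cheeger constant (isoperimetric ratio) of a finite simple graph `G` on `n`
vertices: the minimum of `|∂S|/|S|` over nonempty vertex sets `S` with `|S| ≤ n/2`. -/
noncomputable def cheegerConst {V : Type*} [Fintype V] (G : SimpleGraph V) : ℝ :=
  sInf {r : ℝ | ∃ S : Finset V, S.Nonempty ∧ 2 * S.card ≤ Fintype.card V ∧
    r = (edgeBoundaryCard G S : ℝ) / S.card}

section CheegerAux

open Matrix

variable {V : Type*} [Fintype V] [DecidableEq V] (G : SimpleGraph V) [DecidableRel G.Adj]

private lemma sum_adj_row (G : SimpleGraph V) [DecidableRel G.Adj] {d : ℕ}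
    (hreg : G.IsRegularOfDegree d) (u : V) :
    ∑ v, (G.adjMatrix ℝ) u v = (d : ℝ) := by
  simp only [SimpleGraph.adjMatrix_apply, Finset.sum_boole]
  rw [← SimpleGraph.neighborFinset_eq_filter, ← SimpleGraph.degree, hreg u]

private lemma adj_symm' (u v : V) : (G.adjMatrix ℝ) u v = (G.adjMatrix ℝ) v u := by
  simp [SimpleGraph.adjMatrix_apply, G.adj_comm]

private lemma sum_adj_col {d : ℕ} (hreg : G.IsRegularOfDegree d) (v : V) :
    ∑ u, (G.adjMatrix ℝ) u v = (d : ℝ) := by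
  rw [Finset.sum_congr rfl fun u _ => adj_symm' G u v]
  exact sum_adj_row G hreg v

private lemma quad_expand {d : ℕ} (hreg : G.IsRegularOfDegree d) (x : V → ℝ) :
    ∑ u, ∑ v, (G.adjMatrix ℝ) u v * (x u - x v)^2
      = 2*(d:ℝ)*(∑ v, x v^2) - 2*(∑ u, ∑ v, (G.adjMatrix ℝ) u v * (x u * x v)) := by
  have expand : ∀ u v : V, (G.adjMatrix ℝ) u v * (x u - x v)^2
      = (G.adjMatrix ℝ) u v * x u^2 + (G.adjMatrix ℝ) u v * x v^2
        - 2*((G.adjMatrix ℝ) u v * (x u * x v)) := fun u v => by ring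
  simp only [expand, Finset.sum_sub_distrib, Finset.sum_add_distrib, ← Finset.mul_sum]
  have h1 : ∑ u, ∑ v, (G.adjMatrix ℝ) u v * x u ^ 2 = (d:ℝ) * ∑ u, x u ^2 := by
    rw [Finset.mul_sum]
    refine Finset.sum_congr rfl fun u _ => ?_
    rw [← Finset.sum_mul, sum_adj_row G hreg u, mul_comm]
  have h2 : ∑ u, ∑ v, (G.adjMatrix ℝ) u v * x v ^ 2 = (d:ℝ) * ∑ v, x v ^2 := by
    rw [Finset.sum_comm, Finset.mul_sum]
    refine Finset.sum_congr rfl fun v _ => ?_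
    rw [← Finset.sum_mul, sum_adj_col G hreg v, mul_comm]
  rw [h1, h2]; ring

private lemma inner_form (y : V → ℝ) :
    ∑ u, ((G.adjMatrix ℝ) *ᵥ y) u * y u = ∑ u, ∑ v, (G.adjMatrix ℝ) u v * (y u * y v) := by
  refine Finset.sum_congr rfl fun u _ => ?_
  rw [Matrix.mulVec, dotProduct, Finset.sum_mul]
  exact Finset.sum_congr rfl fun v _ => by ring

private def sumZero (V : Type*) [Fintype V] : Submodule ℝ (EuclideanSpace ℝ V) where
  carrier := {x | ∑ v, x v = 0}
  add_mem' := by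
    intro a b ha hb
    simp only [Set.mem_setOf_eq] at *
    simp [PiLp.add_apply, Finset.sum_add_distrib, ha, hb]
  zero_mem' := by simp
  smul_mem' := by
    intro c a ha
    simp only [Set.mem_setOf_eq] at *
    simp [PiLp.smul_apply, ← Finset.mul_sum, ha]

private lemma rayleigh_le {d : ℕ} (hreg : G.IsRegularOfDegree d) {μ₂ : ℝ}
    (hμ₂ : IsGreatest {μ : ℝ | ∃ x : V → ℝ, x ≠ 0 ∧ ∑ v, x v = 0 ∧
      (G.adjMatrix ℝ).mulVec x = μ • x} μ₂) (x : V → ℝ) (hsum : ∑ v, x v = 0) :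
    ∑ u, ∑ v, (G.adjMatrix ℝ) u v * (x u * x v) ≤ μ₂ * ∑ v, x v ^ 2 := by
  set A := G.adjMatrix ℝ with hA
  have hinv : ∀ y ∈ sumZero V, Matrix.toEuclideanLin A y ∈ sumZero V := by
    intro y hy
    have hy' : ∑ v, y v = 0 := hy
    show ∑ u, (Matrix.toEuclideanLin A y) u = 0
    have h0 : ∀ u, (Matrix.toEuclideanLin A y) u = A.mulVec y u := fun u => rfl
    simp only [h0]
    rw [show ∑ u, A.mulVec y u = ∑ u, ∑ v, A u v * y v from
      Finset.sum_congr rfl fun u _ => rfl]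
    rw [Finset.sum_comm]
    have h1 : ∀ v, ∑ u, A u v * y v = (d : ℝ) * y v := fun v => by
      rw [← Finset.sum_mul, sum_adj_col G hreg v]
    simp [h1, ← Finset.mul_sum, hy']
  -- symmetry
  have hherm : A.IsHermitian := by
    ext u v
    simp [Matrix.conjTranspose_apply, hA, SimpleGraph.adjMatrix_apply, G.adj_comm]
  have hsymm : (Matrix.toEuclideanLin A).IsSymmetric :=
    Matrix.isHermitian_iff_isSymmetric.mp hherm
  set T : sumZero V →ₗ[ℝ] sumZero V := (Matrix.toEuclideanLin A).restrict hinv with hT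
  have hTsymm : T.IsSymmetric := hsymm.restrict_invariant hinv
  -- nontrivial
  obtain ⟨z, hz0, hzsum, hzeig⟩ := hμ₂.1
  haveI : Nontrivial (sumZero V) :=
    ⟨⟨WithLp.toLp 2 z, hzsum⟩, 0, fun h => hz0 (by simpa using congrArg Subtype.val h)⟩
  set lam : ℝ := ⨆ y : { y : sumZero V // y ≠ 0 },
      RCLike.re (inner ℝ (T y) (y : sumZero V) : ℝ) / ‖(y : sumZero V)‖ ^ 2 with hlam
  have hEig : Module.End.HasEigenvalue T lam := by
    exact hTsymm.hasEigenvalue_iSup_of_finiteDimensional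
  obtain ⟨w, hw⟩ := hEig.exists_hasEigenvector
  have hweq : T w = lam • w := Module.End.mem_eigenspace_iff.mp hw.1
  -- lam is in the set
  have hlam_mem : lam ∈ {μ : ℝ | ∃ x : V → ℝ, x ≠ 0 ∧ ∑ v, x v = 0 ∧
      A.mulVec x = μ • x} := by
    refine ⟨(w : EuclideanSpace ℝ V), ?_, w.2, ?_⟩
    · intro h
      exact hw.2 (Subtype.ext (by simpa using congrArg (WithLp.toLp 2) h))
    · have := congrArg Subtype.val hweq
      exact congrArg WithLp.ofLp this
  have hlam_le : lam ≤ μ₂ := hμ₂.2 hlam_mem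
  by_cases hx0 : x = 0
  · simp [hx0]
  · set x' : sumZero V := ⟨WithLp.toLp 2 x, hsum⟩ with hx'
    have hx'0 : x' ≠ 0 := fun h => hx0 (by simpa [hx'] using congrArg Subtype.val h)
    have hbdd : BddAbove (Set.range fun y : { y : sumZero V // y ≠ 0 } =>
        RCLike.re (inner ℝ (T y) (y : sumZero V) : ℝ) / ‖(y : sumZero V)‖ ^ 2) := by
      refine ⟨‖LinearMap.toContinuousLinearMap T‖, ?_⟩
      rintro r ⟨y, rfl⟩
      have hy : (0:ℝ) < ‖(y : sumZero V)‖ := norm_pos_iff.mpr y.2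
      have h1 : (inner ℝ (T y) (y : sumZero V) : ℝ) ≤ ‖T (y : sumZero V)‖ * ‖(y : sumZero V)‖ :=
        real_inner_le_norm _ _
      have h2 : ‖T (y : sumZero V)‖ ≤ ‖LinearMap.toContinuousLinearMap T‖ * ‖(y : sumZero V)‖ :=
        (LinearMap.toContinuousLinearMap T).le_opNorm _
      have h3 : (0:ℝ) ≤ ‖LinearMap.toContinuousLinearMap T‖ := ContinuousLinearMap.opNorm_nonneg _
      simp only [RCLike.re_to_real]
      rw [div_le_iff₀ (by positivity)]
      nlinarith
    have hray : RCLike.re (inner ℝ (T x') x' : ℝ) / ‖x'‖ ^ 2 ≤ lam :=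
      le_ciSup hbdd ⟨x', hx'0⟩
    have hinner : (inner ℝ (T x') x' : ℝ) = ∑ u, ∑ v, A u v * (x u * x v) := by
      have e1 : (inner ℝ (T x') x' : ℝ)
          = (inner ℝ ((T x' : EuclideanSpace ℝ V)) ((x' : EuclideanSpace ℝ V)) : ℝ) := rfl
      have e2 : (T x' : EuclideanSpace ℝ V) = WithLp.toLp 2 (A.mulVec x) := rfl
      rw [e1, e2, PiLp.inner_apply]
      simp only [RCLike.inner_apply', conj_trivial, WithLp.ofLp_toLp]
      exact inner_form G x
    have hnorm : ‖x'‖ ^ 2 = ∑ v, x v ^ 2 := by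
      rw [← real_inner_self_eq_norm_sq]
      have e1 : (inner ℝ x' x' : ℝ)
          = (inner ℝ ((x' : EuclideanSpace ℝ V)) ((x' : EuclideanSpace ℝ V)) : ℝ) := rfl
      rw [e1, PiLp.inner_apply]
      simp only [RCLike.inner_apply, conj_trivial]
      exact Finset.sum_congr rfl fun v _ => (sq (x v)).symm ▸ (pow_two (x v)).symm
    have hpos : (0:ℝ) < ‖x'‖ ^ 2 := by
      have : x' ≠ 0 := hx'0
      have := norm_pos_iff.mpr this
      positivity
    simp only [RCLike.re_to_real] at hray
    rw [div_le_iff₀ hpos] at hray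
    have hsq : (0:ℝ) ≤ ∑ v, x v ^ 2 := Finset.sum_nonneg fun v _ => sq_nonneg _
    calc ∑ u, ∑ v, A u v * (x u * x v) = (inner ℝ (T x') x' : ℝ) := hinner.symm
      _ ≤ lam * ‖x'‖ ^ 2 := hray
      _ = lam * ∑ v, x v ^ 2 := by rw [hnorm]
      _ ≤ μ₂ * ∑ v, x v ^ 2 := mul_le_mul_of_nonneg_right hlam_le hsq

private lemma mu2_le {d : ℕ} (hreg : G.IsRegularOfDegree d) {μ₂ : ℝ}
    (hμ₂ : IsGreatest {μ : ℝ | ∃ x : V → ℝ, x ≠ 0 ∧ ∑ v, x v = 0 ∧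
      (G.adjMatrix ℝ).mulVec x = μ • x} μ₂) : μ₂ ≤ d := by
  obtain ⟨z, hz0, hzsum, hzeig⟩ := hμ₂.1
  have hq : ∑ u, ∑ v, (G.adjMatrix ℝ) u v * (z u * z v) = μ₂ * ∑ v, z v ^ 2 := by
    rw [← inner_form G z, hzeig, Finset.mul_sum]
    exact Finset.sum_congr rfl fun u _ => by simp [Pi.smul_apply, smul_eq_mul]; ring
  have hnn : 0 ≤ ∑ u, ∑ v, (G.adjMatrix ℝ) u v * (z u - z v)^2 :=
    Finset.sum_nonneg fun u _ => Finset.sum_nonneg fun v _ =>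
      mul_nonneg (by simp [SimpleGraph.adjMatrix_apply]; positivity) (sq_nonneg _)
  have hexp := quad_expand G hreg z
  obtain ⟨v₀, hv₀⟩ := Function.ne_iff.mp hz0
  have hzpos : 0 < ∑ v, z v ^ 2 :=
    Finset.sum_pos' (fun v _ => sq_nonneg _) ⟨v₀, Finset.mem_univ _, lt_of_le_of_ne (sq_nonneg _) (Ne.symm (pow_ne_zero 2 hv₀))⟩
  nlinarith

private lemma two_le_card {μ₂ : ℝ}
    (hμ₂ : IsGreatest {μ : ℝ | ∃ x : V → ℝ, x ≠ 0 ∧ ∑ v, x v = 0 ∧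
      (G.adjMatrix ℝ).mulVec x = μ • x} μ₂) : 2 ≤ Fintype.card V := by
  obtain ⟨z, hz0, hzsum, -⟩ := hμ₂.1
  obtain ⟨v₀, hv₀⟩ := Function.ne_iff.mp hz0
  by_contra h
  push_neg at h
  haveI : Subsingleton V := Fintype.card_le_one_iff_subsingleton.mp (by omega)
  have huniv : (Finset.univ : Finset V) = {v₀} := by
    apply Finset.eq_singleton_iff_unique_mem.mpr
    exact ⟨Finset.mem_univ _, fun y _ => Subsingleton.elim y v₀⟩
  rw [huniv, Finset.sum_singleton] at hzsum
  exact hv₀ hzsum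


end CheegerAux

/-- Easy direction of the discrete Cheeger inequality: for a `d`-regular finite simple
graph `G` with second-largest adjacency eigenvalue `μ₂` (characterized as the largest
eigenvalue of the adjacency matrix on the orthogonal complement of the all-ones vector),
one has `(d - μ₂)/2 ≤ h(G)`. -/
theorem cheeger_ineq_lower {V : Type*} [Fintype V] [DecidableEq V] (G : SimpleGraph V)
    [DecidableRel G.Adj] (d : ℕ) (hreg : G.IsRegularOfDegree d) (μ₂ : ℝ)
    (hμ₂ : IsGreatest {μ : ℝ | ∃ x : V → ℝ, x ≠ 0 ∧ ∑ v, x v = 0 ∧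
      (G.adjMatrix ℝ).mulVec x = μ • x} μ₂) :
    ((d : ℝ) - μ₂) / 2 ≤ cheegerConst G := by
  have hcard := two_le_card G hμ₂
  obtain ⟨v₀⟩ : Nonempty V := Fintype.card_pos_iff.mp (by omega)
  apply le_csInf
  · exact ⟨_, {v₀}, Finset.singleton_nonempty _, by simpa using hcard, rfl⟩
  rintro r ⟨S, hSne, hScard, rfl⟩
  have hmu := mu2_le G hreg hμ₂
  set n := Fintype.card V with hn
  set s := S.card with hs
  have hs1 : 1 ≤ s := hSne.card_pos
  have hsn : s ≤ n := by omega
  have hcastsub : ((n - s : ℕ) : ℝ) = (n : ℝ) - s := Nat.cast_sub hsn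
  set x : V → ℝ := fun v => if v ∈ S then ((n:ℝ) - s) else -(s:ℝ) with hxdef
  have hsplit : ∀ a b : ℝ, ∑ v, (if v ∈ S then a else b) = s * a + ((n - s : ℕ) : ℝ) * b := by
    intro a b
    rw [Finset.sum_ite, Finset.sum_const, Finset.sum_const]
    have h1 : Finset.univ.filter (fun v => v ∈ S) = S := by
      ext v; simp
    have h2 : (Finset.univ.filter (fun v => ¬ v ∈ S)).card = n - s := by
      rw [show Finset.univ.filter (fun v => ¬ v ∈ S) = Sᶜ from by ext v; simp]
      rw [Finset.card_compl]
    rw [h1, h2]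
    simp [nsmul_eq_mul]
    exact Or.inl hs.symm
  have hsum : ∑ v, x v = 0 := by
    rw [hxdef] at *
    rw [hsplit, hcastsub]; ring
  have hsumsq : ∑ v, x v ^ 2 = (s:ℝ) * ((n:ℝ) - s) * n := by
    have h : ∀ v, x v ^ 2 = if v ∈ S then ((n:ℝ) - s)^2 else (s:ℝ)^2 := by
      intro v
      by_cases hv : v ∈ S <;> simp [hxdef, hv]
    simp only [h]
    rw [hsplit, hcastsub]
    ring
  set B := edgeBoundaryCard G S with hB
  have hBeq : (Finset.univ.filter
      (fun p : V × V => p.1 ∈ S ∧ p.2 ∉ S ∧ G.Adj p.1 p.2)).card = B := by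
    rw [hB, edgeBoundaryCard]
    congr
  have hswap : (Finset.univ.filter
      (fun p : V × V => p.2 ∈ S ∧ p.1 ∉ S ∧ G.Adj p.1 p.2)).card = B := by
    rw [← hBeq]
    apply Finset.card_equiv (Equiv.prodComm V V)
    intro p
    simp only [Finset.mem_filter, Finset.mem_univ, true_and, Equiv.prodComm_apply, Prod.fst_swap,
      Prod.snd_swap]
    try rw [G.adj_comm]
    try tauto
  have hterm : ∀ p : V × V, (G.adjMatrix ℝ) p.1 p.2 * (x p.1 - x p.2)^2
      = (if p.1 ∈ S ∧ p.2 ∉ S ∧ G.Adj p.1 p.2 then ((n:ℝ))^2 else 0)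
        + (if p.2 ∈ S ∧ p.1 ∉ S ∧ G.Adj p.1 p.2 then ((n:ℝ))^2 else 0) := by
    rintro ⟨u, v⟩
    by_cases hu : u ∈ S <;> by_cases hv : v ∈ S <;> by_cases ha : G.Adj u v <;>
      simp [hxdef, hu, hv, ha, SimpleGraph.adjMatrix_apply] <;> try ring
  have hcross : ∑ u, ∑ v, (G.adjMatrix ℝ) u v * (x u - x v)^2 = 2 * (B:ℝ) * (n:ℝ)^2 := by
    rw [← Finset.sum_product', Finset.univ_product_univ]
    rw [Finset.sum_congr rfl fun p _ => hterm p]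
    rw [Finset.sum_add_distrib, ← Finset.sum_filter, ← Finset.sum_filter,
      Finset.sum_const, Finset.sum_const, hBeq, hswap]
    simp only [nsmul_eq_mul]
    ring
  have hkey := rayleigh_le G hreg hμ₂ x hsum
  have hexp := quad_expand G hreg x
  rw [hsumsq] at hkey hexp
  rw [hcross] at hexp
  have h1 : ((d:ℝ) - μ₂) * ((s:ℝ)*((n:ℝ)-s)*(n:ℝ)) ≤ (B:ℝ) * (n:ℝ)^2 := by nlinarith
  have hBnn : (0:ℝ) ≤ (B:ℝ) := Nat.cast_nonneg _
  have hs1R : (1:ℝ) ≤ (s:ℝ) := by exact_mod_cast hs1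
  have h2sR : 2*(s:ℝ) ≤ (n:ℝ) := by exact_mod_cast hScard
  have hspos : (0:ℝ) < (s:ℝ) := by linarith
  rw [div_le_div_iff₀ (by norm_num : (0:ℝ) < 2) hspos]
  nlinarith [h1, mul_nonneg (mul_nonneg hBnn (by linarith : (0:ℝ) ≤ (n:ℝ)))
      (by linarith : (0:ℝ) ≤ (n:ℝ) - 2*(s:ℝ)),
    mul_pos (by linarith : (0:ℝ) < (n:ℝ) - (s:ℝ)) (by linarith : (0:ℝ) < (n:ℝ))]
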